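/- If the effective affinity vanishes, F̃ = 0 (i.e., W_{12} p^st_2 = W_{21} p^st_1, the stalling/marginal detailed balance condition), then the HTR generator coincides with the full time reversal with respect to p^st: W̃ = P_st Wᵀ P_st⁻¹, and moreover p^st is a steady state of W itself: W p^st = 0. -/

import Mathlib

/-- marginal detailed balance: if the effective affinity
vanishes, i.e. `W₁₂ pst₂ = W₂₁ pst₁`, then the HTR generator
`W̃ = W − Wst + Pst Wstᵀ Pst⁻¹` coincides with the full time reversal
`Pst Wᵀ Pst⁻¹`, and `pst` is a steady state of `W` itself.
States `1,2` are indices `0,1`. -/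
theorem marginal_detailed_balance {m : ℕ}
    (W Wst : Matrix (Fin (m + 3)) (Fin (m + 3)) ℝ)
    (hoff : ∀ i j : Fin (m + 3), i ≠ j → 0 ≤ W i j)
    (hcol : ∀ j : Fin (m + 3), ∑ i : Fin (m + 3), W i j = 0)
    (h12 : Wst 0 1 = 0) (h21 : Wst 1 0 = 0)
    (h11 : Wst 0 0 = W 0 0 + W 1 0) (h22 : Wst 1 1 = W 1 1 + W 0 1)
    (hother : ∀ i j : Fin (m + 3),
      ¬((i = 0 ∧ j = 1) ∨ (i = 1 ∧ j = 0) ∨ (i = 0 ∧ j = 0) ∨ (i = 1 ∧ j = 1)) →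
      Wst i j = W i j)
    (pst : Fin (m + 3) → ℝ) (hpst : ∀ i, 0 < pst i)
    (hsteady : Wst.mulVec pst = 0)
    (hstall : W 0 1 * pst 1 = W 1 0 * pst 0) :
    (W - Wst + Matrix.diagonal pst * Wst.transpose *
        Matrix.diagonal (fun i => (pst i)⁻¹)) =
      Matrix.diagonal pst * W.transpose * Matrix.diagonal (fun i => (pst i)⁻¹) ∧
    W.mulVec pst = 0 := by
  have h01 : (0 : Fin (m + 3)) ≠ 1 := by
    intro h
    have := congrArg Fin.val h
    simp [Fin.val_zero, Fin.val_one] at this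
  have hp0 := (hpst 0).ne'
  have hp1 := (hpst 1).ne'
  constructor
  · ext i j
    have lhs_eq : ∀ (A : Matrix (Fin (m+3)) (Fin (m+3)) ℝ),
        (Matrix.diagonal pst * A.transpose *
          Matrix.diagonal (fun i => (pst i)⁻¹)) i j
        = pst i * A j i * (pst j)⁻¹ := by
      intro A
      rw [Matrix.mul_diagonal, Matrix.diagonal_mul, Matrix.transpose_apply]
    rw [Matrix.add_apply, Matrix.sub_apply, lhs_eq, lhs_eq]
    by_cases hij : (i = 0 ∧ j = 1) ∨ (i = 1 ∧ j = 0) ∨ (i = 0 ∧ j = 0) ∨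
        (i = 1 ∧ j = 1)
    · rcases hij with ⟨hi, hj⟩ | ⟨hi, hj⟩ | ⟨hi, hj⟩ | ⟨hi, hj⟩ <;>
        subst hi <;> subst hj
      · rw [h12, h21]
        field_simp
        linarith [hstall]
      · rw [h12, h21]
        field_simp
        linarith [hstall]
      · rw [h11]
        field_simp
        ring
      · rw [h22]
        field_simp
        ring
    · rw [hother i j hij, hother j i (by tauto)]
      ring
  · have hs : ∀ i, ∑ j, Wst i j * pst j = 0 := by
      intro i
      have := congrFun hsteady i
      simpa [Matrix.mulVec, dotProduct] using this
    have key : ∀ i, ∑ j, (W i j - Wst i j) * pst j = 0 := by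
      intro i
      by_cases hi0 : i = 0
      · subst hi0
        have hz : ∀ j ∈ Finset.univ, j ∉ ({0, 1} : Finset (Fin (m+3))) →
            (W 0 j - Wst 0 j) * pst j = 0 := by
          intro j _ hj
          simp only [Finset.mem_insert, Finset.mem_singleton, not_or] at hj
          rw [hother 0 j (by tauto)]
          ring
        rw [← Finset.sum_subset (Finset.subset_univ ({0, 1} : Finset (Fin (m+3)))) hz,
          Finset.sum_pair h01, h11, h12]
        linear_combination hstall
      · by_cases hi1 : i = 1
        · subst hi1
          have hz : ∀ j ∈ Finset.univ, j ∉ ({0, 1} : Finset (Fin (m+3))) →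
              (W 1 j - Wst 1 j) * pst j = 0 := by
            intro j _ hj
            simp only [Finset.mem_insert, Finset.mem_singleton, not_or] at hj
            rw [hother 1 j (by tauto)]
            ring
          rw [← Finset.sum_subset (Finset.subset_univ ({0, 1} : Finset (Fin (m+3)))) hz,
            Finset.sum_pair h01, h22, h21]
          linear_combination - hstall
        · apply Finset.sum_eq_zero
          intro j _
          rw [hother i j (by tauto)]
          ring
    funext i
    have : ∑ j, W i j * pst j
        = ∑ j, Wst i j * pst j + ∑ j, (W i j - Wst i j) * pst j := by
      rw [← Finset.sum_add_distrib]
      apply Finset.sum_congr rfl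
      intro j _
      ring
    simp only [Matrix.mulVec, dotProduct]
    show ∑ j, W i j * pst j = (0 : Fin (m+3) → ℝ) i
    rw [this, hs i, key i]
    simp
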